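/- For every k ≥ 1, the sequence u : ℕ → ℚ defined by u_n = 1^n + 2^n + … + (k+1)^n is recognized by a (k+1)-ambiguous weighted automaton over a unary alphabet, but it is not recognized by any k-ambiguous weighted automaton. -/

import Mathlib

/-- The weighted automaton with states `Fin d`, transition matrix `M`, initial vector `I`
and final vector `F` recognizes the sequence `u`, i.e. `u n = Iᵀ · Mⁿ · F`. -/
def Recognizes {d : ℕ} (M : Matrix (Fin d) (Fin d) ℚ) (I F : Fin d → ℚ) (u : ℕ → ℚ) : Prop :=
  ∀ n : ℕ, u n = dotProduct I ((M ^ n).mulVec F)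

/-- `r` is an accepting run of length `n` of the weighted automaton `(Fin d, M, I, F)`. -/
def AcceptingRun {d : ℕ} (M : Matrix (Fin d) (Fin d) ℚ) (I F : Fin d → ℚ) (n : ℕ)
    (r : Fin (n + 1) → Fin d) : Prop :=
  I (r 0) ≠ 0 ∧ F (r (Fin.last n)) ≠ 0 ∧ ∀ i : Fin n, M (r i.castSucc) (r i.succ) ≠ 0

/-- The ambiguity of a weighted automaton: the number of accepting runs of length `n`. -/
noncomputable def ambiguity {d : ℕ} (M : Matrix (Fin d) (Fin d) ℚ) (I F : Fin d → ℚ)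
    (n : ℕ) : ℕ :=
  Nat.card {r : Fin (n + 1) → Fin d // AcceptingRun M I F n r}

/-- A weighted automaton is polynomially ambiguous if its ambiguity is bounded by a
polynomial in the input length. -/
def PolyAmbiguous {d : ℕ} (M : Matrix (Fin d) (Fin d) ℚ) (I F : Fin d → ℚ) : Prop :=
  ∃ P : Polynomial ℕ, ∀ n : ℕ, ambiguity M I F n ≤ P.eval n


open Finset

namespace PSAH


variable {d : ℕ}

def NRun (M : Matrix (Fin d) (Fin d) ℚ) (I F : Fin d → ℚ) (n : ℕ) (r : ℕ → Fin d) : Prop :=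
  I (r 0) ≠ 0 ∧ F (r n) ≠ 0 ∧ ∀ x, x < n → M (r x) (r (x+1)) ≠ 0

def wt (M : Matrix (Fin d) (Fin d) ℚ) (I F : Fin d → ℚ) (n : ℕ) (r : ℕ → Fin d) : ℚ :=
  I (r 0) * (∏ x ∈ Finset.range n, M (r x) (r (x+1))) * F (r n)

def Stab (n : ℕ) (r : ℕ → Fin d) : Prop := ∀ x, n ≤ x → r x = r n

def NRS (M : Matrix (Fin d) (Fin d) ℚ) (I F : Fin d → ℚ) (n : ℕ) :=
  {r : ℕ → Fin d // NRun M I F n r ∧ Stab n r}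

def Per (r : ℕ → Fin d) (a b g : ℕ) : Prop := ∀ x, a ≤ x → x + g ≤ b → r (x + g) = r x

def ins (r : ℕ → Fin d) (i j h : ℕ) : ℕ → Fin d := fun x =>
  if x < j then r x else if x < j + h then r (i + (x - i) % (j - i)) else r (x - h)

def del (r : ℕ → Fin d) (j h : ℕ) : ℕ → Fin d := fun x =>
  if x < j then r x else r (x + h)

lemma per_mono {r : ℕ → Fin d} {a b g a' b' : ℕ} (h : Per r a b g) (ha : a ≤ a') (hb : b' ≤ b) :
    Per r a' b' g := fun x hx hx' => h x (le_trans ha hx) (le_trans hx' hb)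

lemma per_step {r : ℕ → Fin d} {a b g : ℕ} (h : Per r a b g) :
    ∀ t x, a ≤ x → x + t * g ≤ b → r (x + t * g) = r x := by
  intro t
  induction t with
  | zero => simp
  | succ t ih =>
    intro x hx hxb
    have h1 : x + (t+1) * g = (x + t * g) + g := by ring
    rw [h1, h (x + t*g) (by omega) (by omega), ih x hx (by omega)]

lemma per_peel {r : ℕ → Fin d} {a b g : ℕ} (h : Per r a b g) (hg : 0 < g) :
    ∀ x, a ≤ x → x ≤ b → r x = r (a + (x - a) % g) := by
  intro x
  induction x using Nat.strong_induction_on with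
  | _ x ih =>
    intro hax hxb
    by_cases hc : x - a < g
    · rw [Nat.mod_eq_of_lt hc]; congr 1; omega
    · have e : r x = r (x - g) := by
        have h3 := h (x - g) (by omega) (by omega)
        rwa [show x - g + g = x by omega] at h3
      rw [e, ih (x - g) (by omega) (by omega) (by omega)]
      congr 1
      conv_rhs => rw [show x - a = (x - g - a) + g by omega, Nat.add_mod_right]

lemma exists_loop (r : ℕ → Fin d) (c : ℕ) :
    ∃ i j, c ≤ i ∧ i < j ∧ j ≤ c + d ∧ r i = r j := by
  have hcard : Fintype.card (Fin d) < Fintype.card (Fin (d+1)) := by simp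
  obtain ⟨t1, t2, hne, heq⟩ :=
    Fintype.exists_ne_map_eq_of_card_lt (fun t : Fin (d+1) => r (c + t)) hcard
  rcases lt_or_gt_of_ne hne with hlt | hlt
  · exact ⟨c + t1, c + t2, by omega, by omega, by omega, heq⟩
  · exact ⟨c + t2, c + t1, by omega, by omega, by omega, heq.symm⟩

lemma mod_succ_key (s g : ℕ) : (s+1) % g = (s % g + 1) % g := by
  conv_lhs => rw [Nat.add_mod]
  conv_rhs => rw [Nat.add_mod, Nat.mod_mod_of_dvd _ dvd_rfl]

section insdel

variable {M : Matrix (Fin d) (Fin d) ℚ} {I F : Fin d → ℚ}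

lemma ins_lt {r : ℕ → Fin d} {i j h x : ℕ} (hx : x < j) : ins r i j h x = r x := by
  simp [ins, hx]

lemma ins_mid {r : ℕ → Fin d} {i j h x : ℕ} (hx : j ≤ x) (hx' : x < j + h) :
    ins r i j h x = r (i + (x - i) % (j - i)) := by
  simp [ins, hx', Nat.not_lt.2 hx]

lemma ins_ge {r : ℕ → Fin d} {i j h x : ℕ} (hx : j + h ≤ x) :
    ins r i j h x = r (x - h) := by
  have h1 : ¬ x < j := by omega
  have h2 : ¬ x < j + h := by omega
  simp [ins, h1, h2]

lemma ins_pat {r : ℕ → Fin d} {i j h x : ℕ} (hij : i < j) (hx : i ≤ x) (hx' : x < j + h) :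
    ins r i j h x = r (i + (x - i) % (j - i)) := by
  by_cases hc : x < j
  · rw [ins_lt hc, Nat.mod_eq_of_lt (by omega)]
    congr 1; omega
  · exact ins_mid (by omega) hx'

/-- pattern formula including the right endpoint `j + h`, when `(j-i) ∣ h` and `r i = r j`. -/
lemma ins_pat' {r : ℕ → Fin d} {i j h x : ℕ} (hij : i < j) (hdvd : (j - i) ∣ h)
    (hloop : r i = r j) (hx : i ≤ x) (hx' : x ≤ j + h) :
    ins r i j h x = r (i + (x - i) % (j - i)) := by
  rcases Nat.lt_or_ge x (j + h) with hc | hc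
  · exact ins_pat hij hx hc
  · have hxe : x = j + h := by omega
    subst hxe
    rw [ins_ge le_rfl]
    have h1 : j + h - h = j := by omega
    rw [h1]
    have h2 : j + h - i = (j - i) + h := by omega
    have h3 : ((j - i) + h) % (j - i) = 0 := by
      obtain ⟨c, rfl⟩ := hdvd
      rw [show j - i + (j-i)*c = (j-i) * (c+1) by ring, Nat.mul_mod_right]
    rw [h2, h3, Nat.add_zero, hloop]

lemma ins_stab {r : ℕ → Fin d} {n i j h : ℕ} (hs : Stab n r) (hj : j ≤ n) :
    Stab (n + h) (ins r i j h) := by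
  intro x hx
  rw [ins_ge (by omega), ins_ge (by omega), hs (x - h) (by omega)]
  congr 1; omega

lemma pat_trans {r : ℕ → Fin d} {n i j : ℕ}
    (hM : ∀ x, x < n → M (r x) (r (x+1)) ≠ 0) (hij : i < j)
    (hjn : j ≤ n) (hloop : r i = r j) :
    ∀ s, M (r (i + s % (j-i))) (r (i + (s+1) % (j-i))) ≠ 0 := by
  intro s
  have hg0 : 0 < j - i := by omega
  have ha : s % (j-i) < j - i := Nat.mod_lt _ hg0
  rw [mod_succ_key]
  by_cases hc : s % (j-i) + 1 = j - i
  · rw [hc, Nat.mod_self, Nat.add_zero,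
       show i + s % (j-i) = j - 1 by omega, hloop]
    have h4 := hM (j-1) (by omega)
    rwa [show j - 1 + 1 = j by omega] at h4
  · rw [Nat.mod_eq_of_lt (show s % (j-i) + 1 < j - i by omega),
        show i + (s % (j-i) + 1) = (i + s % (j-i)) + 1 by ring]
    exact hM _ (by omega)

lemma ins_run {r : ℕ → Fin d} {n i j h : ℕ} (hr : NRun M I F n r) (hij : i < j)
    (hjn : j ≤ n) (hloop : r i = r j) (hdvd : (j - i) ∣ h) :
    NRun M I F (n + h) (ins r i j h) := by
  obtain ⟨hI, hF, hM⟩ := hr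
  refine ⟨?_, ?_, ?_⟩
  · rwa [ins_lt (by omega)]
  · rw [ins_ge (by omega)]
    have h1 : n + h - h = n := by omega
    rwa [h1]
  · intro x hx
    rcases Nat.lt_or_ge (x+1) j with hc1 | hc1
    · rw [ins_lt (by omega), ins_lt hc1]; exact hM x (by omega)
    rcases le_or_gt (x+1) (j+h) with hc2 | hc2
    · have hxi : i ≤ x := by omega
      rw [ins_pat' hij hdvd hloop hxi (by omega),
          ins_pat' hij hdvd hloop (by omega) hc2]
      have h1 : x + 1 - i = (x - i) + 1 := by omega
      rw [h1]
      exact pat_trans hM hij hjn hloop (x - i)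
    · rw [ins_ge (by omega), ins_ge (by omega)]
      have h1 : x + 1 - h = (x - h) + 1 := by omega
      rw [h1]
      exact hM _ (by omega)

lemma prod_shift_per {β : Type*} [CommMonoid β] (f : ℕ → β) (g : ℕ)
    (hf : ∀ t, f (t + g) = f t) : ∀ c, ∀ t, f (c * g + t) = f t := by
  intro c
  induction c with
  | zero => simp
  | succ c ih =>
    intro t
    have h1 : (c+1) * g + t = (c * g + t) + g := by ring
    rw [h1, hf, ih]

lemma prod_range_per {β : Type*} [CommMonoid β] (f : ℕ → β) (g c : ℕ)
    (hf : ∀ t, f (t + g) = f t) : ∏ s ∈ range (c * g), f s = (∏ s ∈ range g, f s) ^ c := by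
  induction c with
  | zero => simp
  | succ c ih =>
    have h1 : (c+1) * g = c * g + g := by ring
    rw [h1, Finset.prod_range_add, ih, pow_succ]
    congr 1
    exact Finset.prod_congr rfl fun x _ => prod_shift_per f g hf c x

/-- weight of loop: product of transition weights around one loop period -/
def loopwt (M : Matrix (Fin d) (Fin d) ℚ) (r : ℕ → Fin d) (i g : ℕ) : ℚ :=
  ∏ s ∈ range g, M (r (i + s)) (r (i + s + 1))

lemma ins_wt {r : ℕ → Fin d} {n i j h : ℕ} (hr : NRun M I F n r) (hij : i < j)
    (hjn : j ≤ n) (hloop : r i = r j) (hdvd : (j - i) ∣ h) :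
    wt M I F (n + h) (ins r i j h) = wt M I F n r * (loopwt M r i (j - i)) ^ (h / (j-i)) := by
  have hg0 : 0 < j - i := by omega
  set f₀ : ℕ → ℚ := fun s => M (r (i + s % (j-i))) (r (i + (s+1) % (j-i))) with hf₀
  have hf₀per : ∀ t, f₀ (t + (j-i)) = f₀ t := by
    intro t
    simp only [hf₀]
    rw [Nat.add_mod_right, show t + (j-i) + 1 = (t+1) + (j-i) by ring, Nat.add_mod_right]
  have hof : ∀ x, x < j → M (ins r i j h x) (ins r i j h (x+1)) = M (r x) (r (x+1)) := by
    intro x hx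
    rw [ins_lt hx]
    rcases Nat.lt_or_ge (x+1) j with hc | hc
    · rw [ins_lt hc]
    · have hxe : x + 1 = j := by omega
      rw [ins_pat' hij hdvd hloop (by omega) (by omega), hxe, Nat.mod_self, Nat.add_zero,
        hloop]
  have hmid : ∀ x, x < h → M (ins r i j h (j + x)) (ins r i j h (j + x + 1)) = f₀ x := by
    intro x hx
    rw [ins_pat' hij hdvd hloop (by omega) (by omega),
        ins_pat' hij hdvd hloop (by omega) (by omega)]
    rw [show j + x - i = x + (j-i) by omega, show j + x + 1 - i = (x + 1) + (j-i) by omega,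
        Nat.add_mod_right, Nat.add_mod_right]
  have hend : ∀ x, M (ins r i j h (j + h + x)) (ins r i j h (j + h + x + 1)) =
      M (r (j + x)) (r (j + x + 1)) := by
    intro x
    rw [ins_ge (by omega), ins_ge (by omega)]
    congr 2 <;> omega
  obtain ⟨c, hc⟩ := hdvd
  have e1 : ∏ x ∈ range j, M (ins r i j h x) (ins r i j h (x+1)) =
      ∏ x ∈ range j, M (r x) (r (x+1)) :=
    Finset.prod_congr rfl fun x hx => hof x (mem_range.1 hx)
  have e2 : ∏ x ∈ range h, M (ins r i j h (j + x)) (ins r i j h (j + x + 1)) =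
      (loopwt M r i (j-i)) ^ (h / (j-i)) := by
    have e2a : ∏ x ∈ range h, M (ins r i j h (j + x)) (ins r i j h (j + x + 1)) =
        ∏ x ∈ range h, f₀ x := Finset.prod_congr rfl fun x hx => hmid x (mem_range.1 hx)
    rw [e2a, hc, show (j-i) * c = c * (j-i) by ring, prod_range_per f₀ (j-i) c hf₀per,
      Nat.mul_div_cancel _ hg0]
    congr 1
    unfold loopwt
    apply Finset.prod_congr rfl
    intro s hs
    have hsg : s < j - i := mem_range.1 hs
    simp only [hf₀]
    rw [Nat.mod_eq_of_lt hsg]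
    rcases Nat.lt_or_ge (s+1) (j-i) with hs1 | hs1
    · rw [Nat.mod_eq_of_lt hs1]
      simp [← Nat.add_assoc]
    · rw [show s + 1 = j - i by omega, Nat.mod_self, Nat.add_zero, hloop]
      congr 2
      omega
  have e3 : ∏ x ∈ range (n - j), M (ins r i j h (j + (h + x))) (ins r i j h (j + (h + x) + 1)) =
      ∏ x ∈ range (n - j), M (r (j + x)) (r (j + x + 1)) := by
    apply Finset.prod_congr rfl
    intro x _
    rw [show j + (h + x) = j + h + x by ring]
    exact hend x
  have eQ : (∏ x ∈ range n, M (r x) (r (x+1))) = (∏ x ∈ range j, M (r x) (r (x+1))) *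
      ∏ x ∈ range (n-j), M (r (j+x)) (r (j+x+1)) := by
    conv_lhs => rw [show n = j + (n - j) by omega]
    rw [Finset.prod_range_add]
  have eT : ∏ x ∈ range (n+h), M (ins r i j h x) (ins r i j h (x+1)) =
      (∏ x ∈ range n, M (r x) (r (x+1))) * (loopwt M r i (j-i)) ^ (h / (j-i)) := by
    rw [show n + h = j + (h + (n - j)) by omega, Finset.prod_range_add, Finset.prod_range_add,
      e1, e2, e3, eQ]
    ring
  unfold wt
  rw [ins_lt (by omega), ins_ge (by omega), show n + h - h = n by omega, eT]
  ring

end insdel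


section bridge

variable (M : Matrix (Fin d) (Fin d) ℚ) (I F : Fin d → ℚ)

lemma dot_pow_sum : ∀ n (I : Fin d → ℚ),
    dotProduct I ((M ^ n).mulVec F) =
      ∑ f : Fin (n+1) → Fin d,
        I (f 0) * (∏ i : Fin n, M (f i.castSucc) (f i.succ)) * F (f (Fin.last n)) := by
  intro n
  induction n with
  | zero =>
    intro I
    rw [pow_zero, Matrix.one_mulVec]
    rw [show dotProduct I F = ∑ q : Fin d, I q * F q from rfl]
    apply Fintype.sum_equiv (Equiv.funUnique (Fin 1) (Fin d)).symm
    intro q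
    simp [Equiv.funUnique]
  | succ n ih =>
    intro I
    rw [pow_succ', ← Matrix.mulVec_mulVec, Matrix.dotProduct_mulVec, ih (Matrix.vecMul I M)]
    have hexp : ∀ f : Fin (n+1) → Fin d,
        Matrix.vecMul I M (f 0) * (∏ i : Fin n, M (f i.castSucc) (f i.succ)) * F (f (Fin.last n))
        = ∑ q : Fin d, I q * (M q (f 0) * (∏ i : Fin n, M (f i.castSucc) (f i.succ)) *
            F (f (Fin.last n))) := by
      intro f
      rw [show Matrix.vecMul I M (f 0) = ∑ q : Fin d, I q * M q (f 0) from rfl,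
        Finset.sum_mul, Finset.sum_mul]
      apply Finset.sum_congr rfl
      intro q _
      ring
    rw [Finset.sum_congr rfl fun f _ => hexp f, Finset.sum_comm]
    have hstep : (∑ y : Fin d, ∑ x : Fin (n+1) → Fin d,
        I y * ((M y (x 0) * ∏ i : Fin n, M (x i.castSucc) (x i.succ)) * F (x (Fin.last n))))
        = ∑ p : Fin d × (Fin (n+1) → Fin d),
            I p.1 * ((M p.1 (p.2 0) * ∏ i : Fin n, M (p.2 i.castSucc) (p.2 i.succ)) *
              F (p.2 (Fin.last n))) := by
      rw [Fintype.sum_prod_type]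
    rw [hstep]
    apply Fintype.sum_equiv (Fin.consEquiv (fun _ : Fin (n+2) => Fin d))
    intro x
    obtain ⟨q, f⟩ := x
    have he : (Fin.consEquiv (fun _ : Fin (n+2) => Fin d)) (q, f) = Fin.cons q f := rfl
    rw [he, Fin.prod_univ_succ]
    have h0 : (Fin.cons q f : Fin (n+2) → Fin d) 0 = q := Fin.cons_zero _ _
    have h1 : (Fin.cons q f : Fin (n+2) → Fin d) ((0 : Fin (n+1)).castSucc) = q := by
      rw [Fin.castSucc_zero]; exact Fin.cons_zero _ _
    have h2 : (Fin.cons q f : Fin (n+2) → Fin d) ((0 : Fin (n+1)).succ) = f 0 :=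
      Fin.cons_succ _ _ _
    have h3 : ∀ i : Fin n, (Fin.cons q f : Fin (n+2) → Fin d) (i.succ.castSucc) = f i.castSucc := by
      intro i
      rw [← Fin.succ_castSucc]
      exact Fin.cons_succ _ _ _
    have h4 : ∀ i : Fin n, (Fin.cons q f : Fin (n+2) → Fin d) (i.succ.succ) = f i.succ := by
      intro i; exact Fin.cons_succ _ _ _
    have h5 : (Fin.cons q f : Fin (n+2) → Fin d) (Fin.last (n+1)) = f (Fin.last n) := by
      rw [← Fin.succ_last]; exact Fin.cons_succ _ _ _
    have h6 : ∏ i : Fin n, M ((Fin.cons q f : Fin (n+2) → Fin d) (i.succ.castSucc))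
        ((Fin.cons q f : Fin (n+2) → Fin d) (i.succ.succ))
        = ∏ i : Fin n, M (f i.castSucc) (f i.succ) :=
      Finset.prod_congr rfl fun i _ => by rw [h3 i, h4 i]
    rw [h0, h1, h2, h5, h6]
    ring


def extend (n : ℕ) (f : Fin (n+1) → Fin d) : ℕ → Fin d := fun x => f ⟨min x n, by omega⟩

lemma extend_eq {n : ℕ} (f : Fin (n+1) → Fin d) {x : ℕ} (hx : x ≤ n) :
    extend n f x = f ⟨x, by omega⟩ := by
  unfold extend
  exact congrArg f (Fin.ext (by simp [Nat.min_eq_left hx]))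

lemma extend_run {n : ℕ} (f : Fin (n+1) → Fin d) (hf : AcceptingRun M I F n f) :
    NRun M I F n (extend n f) := by
  obtain ⟨hI, hF, hM⟩ := hf
  refine ⟨?_, ?_, ?_⟩
  · rw [extend_eq f (by omega)]
    have h0 : (⟨0, by omega⟩ : Fin (n+1)) = 0 := rfl
    rwa [h0]
  · rw [extend_eq f le_rfl]
    exact hF
  · intro x hx
    rw [extend_eq f (by omega), extend_eq f (by omega)]
    have := hM ⟨x, hx⟩
    have e1 : (⟨x, by omega⟩ : Fin (n+1)) = (⟨x, hx⟩ : Fin n).castSucc := Fin.ext (by simp)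
    have e2 : (⟨x+1, by omega⟩ : Fin (n+1)) = (⟨x, hx⟩ : Fin n).succ := Fin.ext (by simp)
    rwa [e1, e2]

lemma extend_stab {n : ℕ} (f : Fin (n+1) → Fin d) : Stab n (extend n f) := by
  intro x hx
  unfold extend
  exact congrArg f (Fin.ext (by simp [Nat.min_eq_right hx]))

lemma restr_acc {n : ℕ} {r : ℕ → Fin d} (hr : NRun M I F n r) :
    AcceptingRun M I F n (fun i : Fin (n+1) => r i) := by
  obtain ⟨hI, hF, hM⟩ := hr
  refine ⟨by simpa using hI, by simpa using hF, fun i => ?_⟩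
  have := hM i i.isLt
  simpa using this

def eruns (n : ℕ) : {f : Fin (n+1) → Fin d // AcceptingRun M I F n f} ≃ NRS M I F n where
  toFun f := ⟨extend n f.1, extend_run M I F f.1 f.2, extend_stab f.1⟩
  invFun r := ⟨fun i => r.1 i, restr_acc M I F r.2.1⟩
  left_inv f := Subtype.ext (funext fun i => by
    show extend n f.1 (i : ℕ) = f.1 i
    rw [extend_eq _ (by omega : (i : ℕ) ≤ n)])
  right_inv r := Subtype.ext (funext fun x => by
    show extend n (fun i : Fin (n+1) => r.1 i) x = r.1 x
    rcases le_or_gt x n with hx | hx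
    · rw [extend_eq _ hx]
    · show (fun i : Fin (n+1) => r.1 i) ⟨min x n, by omega⟩ = r.1 x
      simp only [Nat.min_eq_right hx.le]
      rw [r.2.2 x hx.le])

noncomputable instance (n : ℕ) : Fintype (NRS M I F n) := by
  classical exact Fintype.ofEquiv _ (eruns M I F n)

lemma card_NRS (n : ℕ) : Nat.card (NRS M I F n) = ambiguity M I F n := by
  unfold ambiguity
  exact (Nat.card_congr (eruns M I F n)).symm

lemma wt_extend {n : ℕ} (f : Fin (n+1) → Fin d) :
    I (f 0) * (∏ i : Fin n, M (f i.castSucc) (f i.succ)) * F (f (Fin.last n)) =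
      wt M I F n (extend n f) := by
  unfold wt
  have h0 : extend n f 0 = f 0 := by
    rw [extend_eq f (by omega)]
    exact congrArg f rfl
  have hn : extend n f n = f (Fin.last n) := by
    rw [extend_eq f le_rfl]
    rfl
  have hprod : ∏ i : Fin n, M (f i.castSucc) (f i.succ) =
      ∏ x ∈ Finset.range n, M (extend n f x) (extend n f (x+1)) := by
    rw [← Fin.prod_univ_eq_prod_range (fun x => M (extend n f x) (extend n f (x+1))) n]
    apply Finset.prod_congr rfl
    intro i _
    have e1 : extend n f i = f i.castSucc := by
      rw [extend_eq f (by omega)]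
      exact congrArg f (Fin.ext (by simp))
    have e2 : extend n f ((i : ℕ) + 1) = f i.succ := by
      rw [extend_eq f (by omega)]
      exact congrArg f (Fin.ext (by simp))
    rw [e1, e2]
  rw [h0, hn, hprod]

lemma u_eq_sum {u : ℕ → ℚ} (hrec : Recognizes M I F u) (n : ℕ) :
    u n = ∑ r : NRS M I F n, wt M I F n r.1 := by
  classical
  rw [hrec n, dot_pow_sum]
  have hvan : ∀ f : Fin (n+1) → Fin d, f ∈ Finset.univ →
      (I (f 0) * (∏ i : Fin n, M (f i.castSucc) (f i.succ)) * F (f (Fin.last n))) ≠ 0 →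
      AcceptingRun M I F n f := by
    intro f _ hne
    by_contra hacc
    apply hne
    by_cases h1 : I (f 0) = 0
    · rw [h1]; ring
    by_cases h2 : F (f (Fin.last n)) = 0
    · rw [h2]; ring
    have h3 : ∃ i : Fin n, M (f i.castSucc) (f i.succ) = 0 := by
      by_contra h4
      push_neg at h4
      exact hacc ⟨h1, h2, h4⟩
    obtain ⟨i, hi⟩ := h3
    rw [Finset.prod_eq_zero (Finset.mem_univ i) hi]
    ring
  calc ∑ f : Fin (n+1) → Fin d,
        I (f 0) * (∏ i : Fin n, M (f i.castSucc) (f i.succ)) * F (f (Fin.last n))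
      = ∑ f ∈ Finset.univ.filter (AcceptingRun M I F n),
          I (f 0) * (∏ i : Fin n, M (f i.castSucc) (f i.succ)) * F (f (Fin.last n)) :=
        (Finset.sum_filter_of_ne hvan).symm
    _ = ∑ f : {f : Fin (n+1) → Fin d // AcceptingRun M I F n f},
          I (f.1 0) * (∏ i : Fin n, M (f.1 i.castSucc) (f.1 i.succ)) * F (f.1 (Fin.last n)) :=
        Finset.sum_subtype _ (by simp) _
    _ = ∑ r : NRS M I F n, wt M I F n r.1 :=
        Fintype.sum_equiv (eruns M I F n) _ _ (fun f => wt_extend M I F f.1)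

end bridge

lemma per_of_eqs (f : ℕ → Fin d) (i j α D E : ℕ)
    (hα : 0 < α) (hαD : α ≤ D) (hdvd : α ∣ D) (hij : i ≤ j)
    (hpre : ∀ z, i ≤ z → z < j + D → f z = f (i + (z - i) % α))
    (hD : ∀ z, j ≤ z → z ≤ E → f (z + D) = f z) :
    ∀ z, i ≤ z → z + α ≤ E + D → f (z + α) = f z := by
  intro z
  induction z using Nat.strong_induction_on with
  | _ z ih =>
    intro hiz hzE
    rcases Nat.lt_or_ge (z + α) (j + D) with hc | hc
    · rw [hpre (z+α) (by omega) hc, hpre z hiz (by omega)]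
      congr 1
      conv_lhs => rw [show z + α - i = (z - i) + α by omega, Nat.add_mod_right]
    rcases Nat.lt_or_ge z (j + D) with hz | hz
    · -- j + D - α ≤ z < j + D ≤ z + α
      have h1 : f (z + α) = f (z + α - D) := by
        have h2 := hD (z + α - D) (by omega) (by omega)
        rwa [show z + α - D + D = z + α by omega] at h2
      rw [h1, hpre (z + α - D) (by omega) (by omega), hpre z (by omega) (by omega)]
      congr 1
      obtain ⟨t, ht⟩ : α ∣ (D - α) := Nat.dvd_sub hdvd dvd_rfl
      have h3 : z + α - D - i = (z - i) - (D - α) := by omega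
      have h4 : ((z - i) - (D - α)) + α * t = z - i := by omega
      conv_rhs => rw [← h4, Nat.add_mul_mod_self_left]
      rw [h3]
    · -- z ≥ j + D
      have h1 : f z = f (z - D) := by
        have h2 := hD (z - D) (by omega) (by omega)
        rwa [show z - D + D = z by omega] at h2
      have h2 : f (z + α) = f (z - D + α) := by
        have h3 := hD (z - D + α) (by omega) (by omega)
        rwa [show z - D + α + D = z + α by omega] at h3
      rw [h1, h2]
      exact ih (z - D) (by omega) (by omega) (by omega)


section keyper

variable (M : Matrix (Fin d) (Fin d) ℚ) (I F : Fin d → ℚ)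

lemma key_per {k : ℕ} (Hk : ∀ m, Nat.card (NRS M I F m) ≤ k)
    {n : ℕ} (hn : 2*d + 1 ≤ n) (r : ℕ → Fin d) (hr : NRun M I F n r) (hs : Stab n r) :
    ∃ g, 0 < g ∧ g ≤ d ∧ Per r d (n - 2*d) g := by
  rcases Nat.eq_zero_or_pos d with hd | hd
  · subst hd; exact (r 0).elim0
  obtain ⟨i, j, hi0, hij, hjd, hloop1⟩ := exists_loop r 0
  obtain ⟨p, q, hpn, hpq, hqn', hloop2⟩ := exists_loop r (n - d)
  have hqn : q ≤ n := by omega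
  have hjp : j ≤ p := by omega
  obtain ⟨A, hA, hdvd1, hdvd2⟩ : ∃ A, 0 < A ∧ (j - i) ∣ A ∧ (q - p) ∣ A :=
    ⟨(j-i)*(q-p), Nat.mul_pos (by omega) (by omega), Dvd.intro _ rfl, Dvd.intro_left _ rfl⟩
  have hinner_run : ∀ x : ℕ, NRun M I F (n + (k-x)*A) (ins r p q ((k-x)*A)) :=
    fun x => ins_run hr hpq hqn hloop2 (hdvd2.mul_left _)
  have hinner_stab : ∀ x : ℕ, Stab (n + (k-x)*A) (ins r p q ((k-x)*A)) :=
    fun x => ins_stab hs hqn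
  have hlen : ∀ x : ℕ, x ≤ k → n + (k-x)*A + x*A = n + k*A := by
    intro x hx
    rw [Nat.add_assoc, ← Nat.add_mul, show k - x + x = k by omega]
  have hloopIn : ∀ x : ℕ, ins r p q ((k-x)*A) i = ins r p q ((k-x)*A) j := by
    intro x
    rw [ins_lt (show i < q by omega), ins_lt (show j < q by omega)]
    exact hloop1
  have houter_run : ∀ x : ℕ, x ≤ k →
      NRun M I F (n + k*A) (ins (ins r p q ((k-x)*A)) i j (x*A)) := by
    intro x hx
    have h1 := ins_run (hinner_run x) hij (by omega) (hloopIn x) (hdvd1.mul_left x)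
    rwa [hlen x hx] at h1
  have houter_stab : ∀ x : ℕ, x ≤ k →
      Stab (n + k*A) (ins (ins r p q ((k-x)*A)) i j (x*A)) := by
    intro x hx
    have h1 := ins_stab (r := ins r p q ((k-x)*A)) (i := i) (h := x*A)
      (hinner_stab x) (show j ≤ n + (k-x)*A by omega)
    rwa [hlen x hx] at h1
  by_cases hcase : ∃ x1 x2 : ℕ, x1 ≤ k ∧ x2 ≤ k ∧ x1 < x2 ∧
      ins (ins r p q ((k - x1)*A)) i j (x1*A) = ins (ins r p q ((k - x2)*A)) i j (x2*A)
  · -- two pumped runs coincide: extract periodicity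
    obtain ⟨x1, x2, hx1k, hx2k, hx12, heqfun⟩ := hcase
    have heq := fun y => congrFun heqfun y
    have hD1 : x1 * A + (x2 - x1) * A = x2 * A := by
      rw [← Nat.add_mul, show x1 + (x2-x1) = x2 by omega]
    have hB : (k - x2) * A + (x2 - x1) * A = (k - x1) * A := by
      rw [← Nat.add_mul, show (k-x2) + (x2-x1) = k - x1 by omega]
    have hDpos : 0 < (x2 - x1) * A := Nat.mul_pos (by omega) hA
    have hFE2 : ∀ z, j ≤ z →
        ins r p q ((k-x1)*A) (z + (x2-x1)*A) = ins r p q ((k-x2)*A) z := by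
      intro z hz
      have h1 := heq (z + x2 * A)
      rw [ins_ge (show j + x1*A ≤ z + x2*A by omega),
          ins_ge (show j + x2*A ≤ z + x2*A by omega)] at h1
      rwa [show z + x2*A - x1*A = z + (x2-x1)*A by omega,
           show z + x2*A - x2*A = z by omega] at h1
    have hFF2 : ∀ z, z ≤ q + (k-x2)*A →
        ins r p q ((k-x1)*A) z = ins r p q ((k-x2)*A) z := by
      intro z hz
      rcases Nat.lt_or_ge z q with h1 | h1
      · rw [ins_lt h1, ins_lt h1]
      rcases Nat.lt_or_ge z (q + (k-x2)*A) with h2 | h2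
      · rw [ins_mid h1 h2, ins_mid h1 (by omega)]
      · have hze : z = q + (k-x2)*A := by omega
        rw [ins_mid h1 (by omega), ins_ge (by omega),
            show z - (k-x2)*A = q by omega]
        obtain ⟨t, ht⟩ := hdvd2
        have h4 : (k - x2) * A = (q - p) * ((k-x2)*t) := by rw [ht]; ring
        have h3 : z - p = (q - p) + (q-p) * ((k - x2) * t) := by omega
        rw [h3, Nat.add_mul_mod_self_left, Nat.mod_self, Nat.add_zero]
        exact hloop2
    have hPD : ∀ z, j ≤ z → z ≤ q + (k-x2)*A →
        ins r p q ((k-x1)*A) (z + (x2-x1)*A) = ins r p q ((k-x1)*A) z :=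
      fun z h1 h2 => (hFE2 z h1).trans (hFF2 z h2).symm
    have hPPre : ∀ z, i ≤ z → z < j + (x2-x1)*A →
        ins r p q ((k-x1)*A) z = ins r p q ((k-x1)*A) (i + (z - i) % (j - i)) := by
      intro z hz hz'
      rcases Nat.lt_or_ge z j with h1 | h1
      · rw [ins_lt (show z < q by omega), ins_lt (show i + (z-i) % (j-i) < q by
          have := Nat.mod_lt (z-i) (show 0 < j - i by omega); omega)]
        rw [Nat.mod_eq_of_lt (by omega)]
        congr 1; omega
      · have h2 := heq (z + x1 * A)
        rw [ins_ge (show j + x1*A ≤ z + x1*A by omega),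
            show z + x1*A - x1*A = z by omega,
            ins_mid (show j ≤ z + x1*A by omega) (show z + x1*A < j + x2*A by omega)] at h2
        obtain ⟨t, ht⟩ := hdvd1
        have h4 : x1 * A = (j - i) * (x1 * t) := by rw [ht]; ring
        have h5 : z + x1*A - i = (z - i) + (j-i) * (x1*t) := by omega
        rw [h5, Nat.add_mul_mod_self_left] at h2
        rw [h2, ins_lt (show i + (z - i) % (j-i) < q by
          have := Nat.mod_lt (z-i) (show 0 < j - i by omega); omega),
          ins_lt (show i + (z - i) % (j-i) < q by
          have := Nat.mod_lt (z-i) (show 0 < j - i by omega); omega)]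
    have hαA : j - i ≤ A := Nat.le_of_dvd hA hdvd1
    have hAD : A ≤ (x2 - x1) * A := Nat.le_mul_of_pos_left A (by omega)
    have Hper := per_of_eqs (ins r p q ((k-x1)*A)) i j (j-i) ((x2-x1)*A) (q + (k-x2)*A)
      (by omega) (by omega) (hdvd1.mul_left _) (by omega)
      (fun z hz hz' => hPPre z hz hz') hPD
    refine ⟨j - i, by omega, by omega, ?_⟩
    intro x hx hxb
    have e1 : r x = ins r p q ((k-x1)*A) x := (ins_lt (show x < q by omega)).symm
    have e2 : r (x + (j-i)) = ins r p q ((k-x1)*A) (x + (j-i)) :=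
      (ins_lt (show x + (j-i) < q by omega)).symm
    rw [e1, e2]
    exact Hper x (by omega) (by omega)
  · -- all pumped runs distinct : contradiction with ambiguity
    exfalso
    push_neg at hcase
    set RxS : Fin (k+1) → NRS M I F (n + k*A) := fun x =>
      ⟨ins (ins r p q ((k - (x:ℕ))*A)) i j ((x:ℕ)*A),
        houter_run x (by omega), houter_stab x (by omega)⟩ with hRxS
    have hinj : Function.Injective RxS := by
      intro a b hab
      by_contra hne
      have hfn : ins (ins r p q ((k - (a:ℕ))*A)) i j ((a:ℕ)*A) =
          ins (ins r p q ((k - (b:ℕ))*A)) i j ((b:ℕ)*A) := congrArg Subtype.val hab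
      rcases lt_or_gt_of_ne (fun hv : (a:ℕ) = (b:ℕ) => hne (Fin.ext hv)) with hl | hl
      · exact hcase a b (by omega) (by omega) hl hfn
      · exact hcase b a (by omega) (by omega) hl hfn.symm
    have h1 : Nat.card (Fin (k+1)) ≤ Nat.card (NRS M I F (n + k*A)) :=
      Nat.card_le_card_of_injective RxS hinj
    rw [Nat.card_eq_fintype_card, Fintype.card_fin] at h1
    have h2 := Hk (n + k*A)
    omega

end keyper

section philayer

variable {M : Matrix (Fin d) (Fin d) ℚ} {I F : Fin d → ℚ}

lemma del_lt {r : ℕ → Fin d} {j h x : ℕ} (hx : x < j) : del r j h x = r x := by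
  simp [del, hx]

lemma del_ge {r : ℕ → Fin d} {j h x : ℕ} (hx : j ≤ x) : del r j h x = r (x + h) := by
  simp [del, Nat.not_lt.2 hx]

lemma del_run {r : ℕ → Fin d} {n j h : ℕ} (hr : NRun M I F n r) (hj : 0 < j)
    (hjh : j + h ≤ n) (hloop : r (j + h) = r j) : NRun M I F (n - h) (del r j h) := by
  obtain ⟨hI, hF, hM⟩ := hr
  refine ⟨by rwa [del_lt hj], ?_, ?_⟩
  · rw [del_ge (by omega), show n - h + h = n by omega]
    exact hF
  · intro x hx
    rcases Nat.lt_or_ge (x+1) j with h1 | h1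
    · rw [del_lt (by omega), del_lt h1]
      exact hM x (by omega)
    · rcases Nat.lt_or_ge x j with h2 | h2
      · -- x + 1 = j
        have hxe : x + 1 = j := by omega
        rw [del_lt h2, del_ge h1, hxe, hloop]
        rw [← hxe]
        exact hM x (by omega)
      · rw [del_ge h2, del_ge (by omega), show x + 1 + h = (x + h) + 1 by omega]
        exact hM _ (by omega)

lemma del_stab {r : ℕ → Fin d} {n j h : ℕ} (hs : Stab n r) (hjh : j + h ≤ n) :
    Stab (n - h) (del r j h) := by
  intro x hx
  rw [del_ge (by omega), del_ge (by omega), hs (x + h) (by omega),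
    hs (n - h + h) (by omega)]

lemma insG_per {r : ℕ → Fin d} {n g : ℕ} (hg0 : 0 < g) (hgd : g ≤ d)
    (hN : 4*d + 2*d.factorial + 4 ≤ n) (hper : Per r d (n - 2*d) g) :
    Per (ins r d (d+g) d.factorial) d (n + d.factorial - 2*d) g := by
  have hGd : d ≤ d.factorial := Nat.self_le_factorial d
  have hgG : g ∣ d.factorial := Nat.dvd_factorial hg0 hgd
  have hloop : r d = r (d + g) := (hper d le_rfl (by omega)).symm
  have hij : d < d + g := by omega
  have hji : (d + g) - d = g := by omega
  have hdvd : (d + g) - d ∣ d.factorial := by rw [hji]; exact hgG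
  have hpeel := per_peel hper hg0
  intro x hx hxb
  rcases le_or_gt (x + g) (d + g + d.factorial) with hc | hc
  · rw [ins_pat' hij hdvd hloop (by omega) hc,
        ins_pat' hij hdvd hloop (by omega) (by omega), hji]
    congr 1
    conv_lhs => rw [show x + g - d = (x - d) + g by omega, Nat.add_mod_right]
  · rcases le_or_gt (d + g + d.factorial) x with hc2 | hc2
    · rw [ins_ge (by omega), ins_ge (by omega),
        show x + g - d.factorial = (x - d.factorial) + g by omega]
      exact hper (x - d.factorial) (by omega) (by omega)
    · rw [ins_ge (by omega), ins_pat' hij hdvd hloop (by omega) (by omega), hji]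
      obtain ⟨t, ht⟩ : g ∣ (d.factorial - g) := Nat.dvd_sub hgG dvd_rfl
      rw [hpeel (x + g - d.factorial) (by omega) (by omega)]
      congr 1
      conv_rhs => rw [show x - d = (x + g - d.factorial - d) + g * t by omega,
        Nat.add_mul_mod_self_left]

lemma per_of_insG {r : ℕ → Fin d} {n g g' : ℕ} (hg0 : 0 < g) (hgd : g ≤ d)
    (hN : 4*d + 2*d.factorial + 4 ≤ n) (hper : Per r d (n - 2*d) g)
    (hg'0 : 0 < g') (hg'd : g' ≤ d)
    (hper' : Per (ins r d (d+g) d.factorial) d (n + d.factorial - 2*d) g') :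
    Per r d (n - 2*d) g' := by
  have hGd : d ≤ d.factorial := Nat.self_le_factorial d
  have hgG : g ∣ d.factorial := Nat.dvd_factorial hg0 hgd
  have hloop : r d = r (d + g) := (hper d le_rfl (by omega)).symm
  have hij : d < d + g := by omega
  have hji : (d + g) - d = g := by omega
  have hdvd : (d + g) - d ∣ d.factorial := by rw [hji]; exact hgG
  have hpeel := per_peel hper hg0
  have hup : ∀ x, d ≤ x → x ≤ n - 2*d → ins r d (d+g) d.factorial (x + d.factorial) = r x := by
    intro x hx hxb
    rcases le_or_gt (d + g) x with h1 | h1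
    · rw [ins_ge (by omega), show x + d.factorial - d.factorial = x by omega]
    · rw [ins_pat' hij hdvd hloop (by omega) (by omega), hji]
      obtain ⟨t, ht⟩ := hgG
      rw [show x + d.factorial - d = (x - d) + g * t by omega, Nat.add_mul_mod_self_left]
      exact (hpeel x hx hxb).symm
  intro x hx hxb
  have e1 := hup x hx (by omega)
  have e2 := hup (x + g') (by omega) (by omega)
  have e3 := hper' (x + d.factorial) (by omega) (by omega)
  rw [← e2, ← e1, show x + g' + d.factorial = x + d.factorial + g' by omega]
  exact e3

lemma delG_per {r' : ℕ → Fin d} {n g' : ℕ} (hg'0 : 0 < g') (hg'd : g' ≤ d)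
    (hN : 4*d + 2*d.factorial + 4 ≤ n) (hper' : Per r' d (n + d.factorial - 2*d) g') :
    Per (del r' (d+g') d.factorial) d (n - 2*d) g' := by
  have hGd : d ≤ d.factorial := Nat.self_le_factorial d
  have hg'G : g' ∣ d.factorial := Nat.dvd_factorial hg'0 hg'd
  have hlow : ∀ z, d ≤ z → z ≤ n - 2*d → del r' (d+g') d.factorial z = r' z := by
    intro z hz hzb
    rcases Nat.lt_or_ge z (d + g') with h1 | h1
    · exact del_lt h1
    · rw [del_ge h1]
      have := per_step hper' (d.factorial / g') z (by omega)
        (by rw [Nat.div_mul_cancel hg'G]; omega)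
      rwa [Nat.div_mul_cancel hg'G] at this
  intro x hx hxb
  rw [hlow x hx (by omega), hlow (x + g') (by omega) (by omega)]
  exact hper' x (by omega) (by omega)

lemma per_of_delG {r' : ℕ → Fin d} {n g' g'' : ℕ} (hg'0 : 0 < g') (hg'd : g' ≤ d)
    (hN : 4*d + 2*d.factorial + 4 ≤ n) (hper' : Per r' d (n + d.factorial - 2*d) g')
    (hg''0 : 0 < g'') (hg''d : g'' ≤ d)
    (hperdel : Per (del r' (d+g') d.factorial) d (n - 2*d) g'') :
    Per r' d (n + d.factorial - 2*d) g'' := by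
  have hGd : d ≤ d.factorial := Nat.self_le_factorial d
  have hg'G : g' ∣ d.factorial := Nat.dvd_factorial hg'0 hg'd
  have hlow : ∀ z, d ≤ z → z ≤ n - 2*d → r' z = del r' (d+g') d.factorial z := by
    intro z hz hzb
    rcases Nat.lt_or_ge z (d + g') with h1 | h1
    · exact (del_lt h1).symm
    · rw [del_ge h1]
      have := per_step hper' (d.factorial / g') z (by omega)
        (by rw [Nat.div_mul_cancel hg'G]; omega)
      rw [Nat.div_mul_cancel hg'G] at this
      exact this.symm
  have hhigh : ∀ z, d + d.factorial ≤ z → z ≤ n + d.factorial - 2*d →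
      r' z = del r' (d+g') d.factorial (z - d.factorial) := by
    intro z hz hzb
    rcases Nat.lt_or_ge (z - d.factorial) (d + g') with h1 | h1
    · rw [del_lt h1]
      have := per_step hper' (d.factorial / g') (z - d.factorial) (by omega)
        (by rw [Nat.div_mul_cancel hg'G]; omega)
      rw [Nat.div_mul_cancel hg'G, show z - d.factorial + d.factorial = z by omega] at this
      exact this
    · rw [del_ge h1, show z - d.factorial + d.factorial = z by omega]
  intro x hx hxb
  rcases le_or_gt (x + g'') (n - 2*d) with hc | hc
  · rw [hlow x hx (by omega), hlow (x + g'') (by omega) hc]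
    exact hperdel x hx (by omega)
  · have hx2 : d + d.factorial ≤ x := by omega
    rw [hhigh x hx2 (by omega), hhigh (x + g'') (by omega) (by omega),
      show x + g'' - d.factorial = (x - d.factorial) + g'' by omega]
    exact hperdel (x - d.factorial) (by omega) (by omega)

lemma ins_delG {r' : ℕ → Fin d} {n g' : ℕ} (hg'0 : 0 < g') (hg'd : g' ≤ d)
    (hN : 4*d + 2*d.factorial + 4 ≤ n) (hper' : Per r' d (n + d.factorial - 2*d) g') :
    ins (del r' (d+g') d.factorial) d (d+g') d.factorial = r' := by
  have hGd : d ≤ d.factorial := Nat.self_le_factorial d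
  have hg'G : g' ∣ d.factorial := Nat.dvd_factorial hg'0 hg'd
  have hji : (d + g') - d = g' := by omega
  funext z
  rcases Nat.lt_or_ge z (d + g') with h1 | h1
  · rw [ins_lt h1, del_lt h1]
  · rcases Nat.lt_or_ge z (d + g' + d.factorial) with h2 | h2
    · rw [ins_mid h1 h2, hji]
      have hm : d + (z - d) % g' < d + g' := by
        have := Nat.mod_lt (z - d) hg'0
        omega
      rw [del_lt hm]
      exact (per_peel hper' hg'0 z (by omega) (by omega)).symm
    · rw [ins_ge h2, del_ge (by omega), show z - d.factorial + d.factorial = z by omega]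

lemma del_insG {r : ℕ → Fin d} {g : ℕ} (hg0 : 0 < g) :
    del (ins r d (d+g) d.factorial) (d+g) d.factorial = r := by
  funext z
  rcases Nat.lt_or_ge z (d + g) with h1 | h1
  · rw [del_lt h1, ins_lt h1]
  · rw [del_ge h1, ins_ge (by omega), show z + d.factorial - d.factorial = z by omega]

end philayer

section ppmu

variable {M : Matrix (Fin d) (Fin d) ℚ} {I F : Fin d → ℚ}

open Classical in
noncomputable def PP (r : ℕ → Fin d) (n : ℕ) : ℕ :=
  if hex : ∃ g, 0 < g ∧ g ≤ d ∧ Per r d (n - 2*d) g then Nat.find hex else 1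

open Classical in
lemma PP_spec {r : ℕ → Fin d} {n : ℕ} (hex : ∃ g, 0 < g ∧ g ≤ d ∧ Per r d (n - 2*d) g) :
    0 < PP r n ∧ PP r n ≤ d ∧ Per r d (n - 2*d) (PP r n) := by
  unfold PP
  rw [dif_pos hex]
  exact Nat.find_spec hex

open Classical in
lemma PP_min {r : ℕ → Fin d} {n : ℕ} (hex : ∃ g, 0 < g ∧ g ≤ d ∧ Per r d (n - 2*d) g)
    {g' : ℕ} (h : 0 < g' ∧ g' ≤ d ∧ Per r d (n - 2*d) g') : PP r n ≤ g' := by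
  unfold PP
  rw [dif_pos hex]
  exact Nat.find_min' hex h

noncomputable def mu (M : Matrix (Fin d) (Fin d) ℚ) (r : ℕ → Fin d) (n : ℕ) : ℚ :=
  (loopwt M r d (PP r n)) ^ (d.factorial / PP r n)

lemma PP_ins {r : ℕ → Fin d} {n : ℕ} (hN : 4*d + 2*d.factorial + 4 ≤ n)
    (hex : ∃ g, 0 < g ∧ g ≤ d ∧ Per r d (n - 2*d) g) :
    PP (ins r d (d + PP r n) d.factorial) (n + d.factorial) = PP r n := by
  obtain ⟨hg0, hgd, hper⟩ := PP_spec hex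
  have hper' := insG_per hg0 hgd hN hper
  have hex' : ∃ g, 0 < g ∧ g ≤ d ∧ Per (ins r d (d + PP r n) d.factorial) d
      ((n + d.factorial) - 2*d) g := ⟨PP r n, hg0, hgd, hper'⟩
  apply le_antisymm
  · exact PP_min hex' ⟨hg0, hgd, hper'⟩
  · obtain ⟨hg'0, hg'd, hper''⟩ := PP_spec hex'
    exact PP_min hex ⟨hg'0, hg'd, per_of_insG hg0 hgd hN hper hg'0 hg'd hper''⟩

lemma loopwt_ins {r : ℕ → Fin d} {n g : ℕ} (hg0 : 0 < g) (hgd : g ≤ d)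
    (hN : 4*d + 2*d.factorial + 4 ≤ n) (hper : Per r d (n - 2*d) g) :
    loopwt M (ins r d (d+g) d.factorial) d g = loopwt M r d g := by
  have hGd := Nat.self_le_factorial d
  have hloop : r d = r (d+g) := (hper d le_rfl (by omega)).symm
  have hdvd : (d + g) - d ∣ d.factorial := by
    rw [show (d+g)-d = g by omega]
    exact Nat.dvd_factorial hg0 hgd
  unfold loopwt
  apply Finset.prod_congr rfl
  intro s hs
  have hsg : s < g := Finset.mem_range.1 hs
  have e1 : ins r d (d+g) d.factorial (d + s) = r (d + s) := ins_lt (by omega)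
  have e2 : ins r d (d+g) d.factorial (d + s + 1) = r (d + s + 1) := by
    rcases Nat.lt_or_ge (d + s + 1) (d + g) with h1 | h1
    · exact ins_lt h1
    · have hse : d + s + 1 = d + g := by omega
      rw [ins_pat' (show d < d+g by omega) hdvd hloop (by omega) (by omega),
        show d + s + 1 - d = s + 1 by omega, show (d+g) - d = g by omega,
        show s + 1 = g by omega, Nat.mod_self, Nat.add_zero, hloop, hse]
  rw [e1, e2]

lemma mu_ins {r : ℕ → Fin d} {n : ℕ} (hN : 4*d + 2*d.factorial + 4 ≤ n)
    (hex : ∃ g, 0 < g ∧ g ≤ d ∧ Per r d (n - 2*d) g) :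
    mu M (ins r d (d + PP r n) d.factorial) (n + d.factorial) = mu M r n := by
  unfold mu
  rw [PP_ins hN hex,
    loopwt_ins (PP_spec hex).1 (PP_spec hex).2.1 hN (PP_spec hex).2.2]

lemma wt_ins_mu {r : ℕ → Fin d} {n : ℕ} (hr : NRun M I F n r)
    (hN : 4*d + 2*d.factorial + 4 ≤ n)
    (hex : ∃ g, 0 < g ∧ g ≤ d ∧ Per r d (n - 2*d) g) :
    wt M I F (n + d.factorial) (ins r d (d + PP r n) d.factorial) =
      wt M I F n r * mu M r n := by
  obtain ⟨hg0, hgd, hper⟩ := PP_spec hex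
  have hGd := Nat.self_le_factorial d
  have hloop : r d = r (d + PP r n) := (hper d le_rfl (by omega)).symm
  have h1 := ins_wt (h := d.factorial) hr (show d < d + PP r n by omega) (by omega) hloop
    (by rw [show (d + PP r n) - d = PP r n by omega]; exact Nat.dvd_factorial hg0 hgd)
  rw [h1, show (d + PP r n) - d = PP r n by omega]
  rfl

lemma step_bij {k : ℕ} (Hk : ∀ m, Nat.card (NRS M I F m) ≤ k) {n : ℕ}
    (hN : 4*d + 2*d.factorial + 4 ≤ n) :
    ∃ Φ : NRS M I F n → NRS M I F (n + d.factorial),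
      Function.Bijective Φ ∧
      (∀ r, wt M I F (n + d.factorial) (Φ r).1 = wt M I F n r.1 * mu M r.1 n) ∧
      (∀ r, mu M (Φ r).1 (n + d.factorial) = mu M r.1 n) := by
  have hGd := Nat.self_le_factorial d
  have hG1 := Nat.factorial_pos d
  have hex : ∀ r : NRS M I F n, ∃ g, 0 < g ∧ g ≤ d ∧ Per r.1 d (n - 2*d) g :=
    fun r => key_per M I F Hk (by omega) r.1 r.2.1 r.2.2
  have hex' : ∀ r' : NRS M I F (n + d.factorial),
      ∃ g, 0 < g ∧ g ≤ d ∧ Per r'.1 d (n + d.factorial - 2*d) g :=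
    fun r' => key_per M I F Hk (by omega) r'.1 r'.2.1 r'.2.2
  have hΦrun : ∀ r : NRS M I F n, NRun M I F (n + d.factorial)
      (ins r.1 d (d + PP r.1 n) d.factorial) := by
    intro r
    obtain ⟨hg0, hgd, hper⟩ := PP_spec (hex r)
    exact ins_run r.2.1 (by omega) (by omega) ((hper d le_rfl (by omega)).symm)
      (by rw [show (d + PP r.1 n) - d = PP r.1 n by omega]; exact Nat.dvd_factorial hg0 hgd)
  have hΦstab : ∀ r : NRS M I F n, Stab (n + d.factorial)
      (ins r.1 d (d + PP r.1 n) d.factorial) := by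
    intro r
    obtain ⟨hg0, hgd, hper⟩ := PP_spec (hex r)
    exact ins_stab r.2.2 (by omega)
  refine ⟨fun r => ⟨ins r.1 d (d + PP r.1 n) d.factorial, hΦrun r, hΦstab r⟩,
    ⟨?_, ?_⟩, ?_, ?_⟩
  · intro r1 r2 h12
    have hfn : ins r1.1 d (d + PP r1.1 n) d.factorial =
        ins r2.1 d (d + PP r2.1 n) d.factorial := congrArg Subtype.val h12
    have hP : PP r1.1 n = PP r2.1 n := by
      rw [← PP_ins hN (hex r1), ← PP_ins hN (hex r2), hfn]
    apply Subtype.ext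
    calc r1.1 = del (ins r1.1 d (d + PP r1.1 n) d.factorial) (d + PP r1.1 n) d.factorial :=
        (del_insG (PP_spec (hex r1)).1).symm
      _ = del (ins r2.1 d (d + PP r2.1 n) d.factorial) (d + PP r2.1 n) d.factorial := by
        rw [hfn, hP]
      _ = r2.1 := del_insG (PP_spec (hex r2)).1
  · intro r'
    obtain ⟨hg'0, hg'd, hper'⟩ := PP_spec (hex' r')
    have hg'G : PP r'.1 (n + d.factorial) ∣ d.factorial :=
      Nat.dvd_factorial hg'0 hg'd
    have hloopdel : r'.1 (d + PP r'.1 (n + d.factorial) + d.factorial) =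
        r'.1 (d + PP r'.1 (n + d.factorial)) := by
      have h2 := per_step hper' (d.factorial / PP r'.1 (n + d.factorial))
        (d + PP r'.1 (n + d.factorial)) (by omega)
        (by rw [Nat.div_mul_cancel hg'G]; omega)
      rwa [Nat.div_mul_cancel hg'G] at h2
    have hrunD : NRun M I F n (del r'.1 (d + PP r'.1 (n + d.factorial)) d.factorial) := by
      have h1 := del_run r'.2.1 (show 0 < d + PP r'.1 (n + d.factorial) by omega)
        (by omega) hloopdel
      rwa [show n + d.factorial - d.factorial = n by omega] at h1
    have hstabD : Stab n (del r'.1 (d + PP r'.1 (n + d.factorial)) d.factorial) := by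
      have h1 := del_stab r'.2.2
        (show d + PP r'.1 (n + d.factorial) + d.factorial ≤ n + d.factorial by omega)
      rwa [show n + d.factorial - d.factorial = n by omega] at h1
    refine ⟨⟨del r'.1 (d + PP r'.1 (n + d.factorial)) d.factorial, hrunD, hstabD⟩,
      Subtype.ext ?_⟩
    have hperD : Per (del r'.1 (d + PP r'.1 (n + d.factorial)) d.factorial) d (n - 2*d)
        (PP r'.1 (n + d.factorial)) := delG_per hg'0 hg'd hN hper'
    have hPrr : PP (del r'.1 (d + PP r'.1 (n + d.factorial)) d.factorial) n =
        PP r'.1 (n + d.factorial) := by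
      apply le_antisymm
      · exact PP_min ⟨_, hg'0, hg'd, hperD⟩ ⟨hg'0, hg'd, hperD⟩
      · obtain ⟨hg''0, hg''d, hper''⟩ := PP_spec ⟨_, hg'0, hg'd, hperD⟩
        exact PP_min (hex' r')
          ⟨hg''0, hg''d, per_of_delG hg'0 hg'd hN hper' hg''0 hg''d hper''⟩
    show ins (del r'.1 (d + PP r'.1 (n + d.factorial)) d.factorial) d
        (d + PP (del r'.1 (d + PP r'.1 (n + d.factorial)) d.factorial) n) d.factorial = r'.1
    rw [hPrr]
    exact ins_delG hg'0 hg'd hN hper'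
  · intro r
    exact wt_ins_mu r.2.1 hN (hex r)
  · intro r
    exact mu_ins hN (hex r)

lemma sum_pow {k : ℕ} (Hk : ∀ m, Nat.card (NRS M I F m) ≤ k) :
    ∀ (t n : ℕ), 4*d + 2*d.factorial + 4 ≤ n →
    ∑ s : NRS M I F (n + t * d.factorial), wt M I F (n + t * d.factorial) s.1
      = ∑ s : NRS M I F n, wt M I F n s.1 * (mu M s.1 n) ^ t := by
  intro t
  induction t with
  | zero =>
    intro n hN
    rw [show n + 0 * d.factorial = n by omega]
    simp
  | succ t ih =>
    intro n hN
    obtain ⟨Φ, hbij, hwt, hmu⟩ := step_bij Hk hN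
    have h1 : n + (t+1) * d.factorial = (n + d.factorial) + t * d.factorial := by ring
    rw [h1, ih (n + d.factorial) (by omega)]
    have h2 : ∀ r : NRS M I F n, wt M I F n r.1 * mu M r.1 n ^ (t+1)
        = wt M I F (n + d.factorial) (Φ r).1 * mu M (Φ r).1 (n + d.factorial) ^ t := by
      intro r
      rw [hwt r, hmu r, pow_succ]
      ring
    exact (Fintype.sum_bijective Φ hbij _ _ h2).symm

end ppmu

section final

lemma no_k_ambiguous (k : ℕ) {d : ℕ} (M : Matrix (Fin d) (Fin d) ℚ)
    (I F : Fin d → ℚ)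
    (hrec : Recognizes M I F (fun n => ∑ i ∈ Finset.range (k + 1), ((i : ℚ) + 1) ^ n))
    (hamb : ∀ n : ℕ, ambiguity M I F n ≤ k) : False := by
  classical
  have hG1 : 0 < d.factorial := Nat.factorial_pos d
  set N := 4*d + 2*d.factorial + 4 with hNdef
  have Hk : ∀ m, Nat.card (NRS M I F m) ≤ k := fun m => by
    rw [card_NRS]; exact hamb m
  have hA : ∀ m : ℕ, (∑ i ∈ Finset.range (k + 1), ((i : ℚ) + 1) ^ (N + m * d.factorial))
      = ∑ s : NRS M I F N, wt M I F N s.1 * (mu M s.1 N) ^ m := by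
    intro m
    have h1 := u_eq_sum M I F hrec (N + m * d.factorial)
    rw [sum_pow Hk m N (by omega)] at h1
    exact h1
  have hcard : Fintype.card (NRS M I F N) ≤ k := by
    have h2 := Hk N
    rwa [Nat.card_eq_fintype_card] at h2
  obtain ⟨e⟩ : Nonempty (NRS M I F N ↪ Fin k) := by
    apply Function.Embedding.nonempty_of_card_le
    rwa [Fintype.card_fin]
  set a : Fin k → ℚ :=
    fun i => ∑ r : NRS M I F N, if e r = i then wt M I F N r.1 else 0 with hadef
  set xx : Fin k → ℚ :=
    fun i => ∑ r : NRS M I F N, if e r = i then mu M r.1 N else 0 with hxdef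
  have hsingle : ∀ (i : Fin k) (f : NRS M I F N → ℚ) (r0 : NRS M I F N), e r0 = i →
      (∑ r : NRS M I F N, if e r = i then f r else 0) = f r0 := by
    intro i f r0 hr0
    refine (Finset.sum_eq_single r0 ?_ ?_).trans (by rw [if_pos hr0])
    · intro b _ hb
      exact if_neg (fun hc => hb (e.injective (hc.trans hr0.symm)))
    · intro hr
      exact absurd (Finset.mem_univ r0) hr
  have hzero : ∀ (i : Fin k) (f : NRS M I F N → ℚ), (∀ r : NRS M I F N, e r ≠ i) →
      (∑ r : NRS M I F N, if e r = i then f r else 0) = 0 := by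
    intro i f hne
    exact Finset.sum_eq_zero (fun b _ => if_neg (hne b))
  have hsum : ∀ m : ℕ, ∑ i : Fin k, a i * xx i ^ m
      = ∑ r : NRS M I F N, wt M I F N r.1 * (mu M r.1 N) ^ m := by
    intro m
    have hterm : ∀ i : Fin k, a i * xx i ^ m
        = ∑ r : NRS M I F N, (if e r = i then wt M I F N r.1 * mu M r.1 N ^ m else 0) := by
      intro i
      by_cases hex2 : ∃ r0 : NRS M I F N, e r0 = i
      · obtain ⟨r0, hr0⟩ := hex2
        have ha : a i = wt M I F N r0.1 := hsingle i _ r0 hr0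
        have hx : xx i = mu M r0.1 N := hsingle i _ r0 hr0
        rw [ha, hx, hsingle i _ r0 hr0]
      · push_neg at hex2
        have ha : a i = 0 := hzero i _ hex2
        rw [ha, hzero i _ hex2, zero_mul]
    rw [Finset.sum_congr rfl (fun i _ => hterm i), Finset.sum_comm]
    apply Finset.sum_congr rfl
    intro r _
    simp
  -- the Hankel matrix
  set HM : Matrix (Fin (k+1)) (Fin (k+1)) ℚ :=
    Matrix.of (fun s t : Fin (k+1) =>
      ∑ r : NRS M I F N, wt M I F N r.1 * (mu M r.1 N) ^ ((s:ℕ) + (t:ℕ))) with hHM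
  -- Vandermonde factorization: det HM ≠ 0
  set xv : Fin (k+1) → ℚ := fun j => ((j:ℚ)+1) ^ d.factorial with hxv
  set cv : Fin (k+1) → ℚ := fun j => ((j:ℚ)+1) ^ N with hcv
  have hHV : HM = (Matrix.vandermonde xv).transpose * (Matrix.diagonal cv * Matrix.vandermonde xv) := by
    ext s t
    rw [Matrix.mul_apply]
    have hterm2 : ∀ j : Fin (k+1),
        (Matrix.vandermonde xv).transpose s j * (Matrix.diagonal cv * Matrix.vandermonde xv) j t
        = ((j:ℚ)+1) ^ (N + ((s:ℕ)+(t:ℕ)) * d.factorial) := by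
      intro j
      rw [Matrix.transpose_apply, Matrix.diagonal_mul, Matrix.vandermonde_apply,
        Matrix.vandermonde_apply]
      conv_rhs => rw [pow_add, pow_mul', pow_add]
      simp only [hxv, hcv]
      ring
    have h3 : (∑ j : Fin (k+1), ((j:ℚ)+1) ^ (N + ((s:ℕ)+(t:ℕ)) * d.factorial))
        = ∑ r : NRS M I F N, wt M I F N r.1 * (mu M r.1 N) ^ ((s:ℕ) + (t:ℕ)) := by
      rw [Fin.sum_univ_eq_sum_range
        (fun j => ((j:ℚ)+1) ^ (N + ((s:ℕ)+(t:ℕ)) * d.factorial)) (k+1)]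
      exact hA _
    rw [Finset.sum_congr rfl (fun j _ => hterm2 j), h3]
    rfl
  have hvne : Matrix.det (Matrix.vandermonde xv) ≠ 0 := by
    rw [Matrix.det_vandermonde]
    rw [Finset.prod_ne_zero_iff]
    intro i _
    rw [Finset.prod_ne_zero_iff]
    intro j hj
    have hij : i < j := Finset.mem_Ioi.1 hj
    have hlt : xv i < xv j := by
      rw [hxv]
      apply pow_lt_pow_left₀ _ (by positivity) (by omega)
      have : (i:ℚ) < (j:ℚ) := by exact_mod_cast hij
      linarith
    exact sub_ne_zero_of_ne (ne_of_gt hlt)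
  have hdetne : HM.det ≠ 0 := by
    rw [hHV, Matrix.det_mul, Matrix.det_mul, Matrix.det_transpose, Matrix.det_diagonal]
    apply mul_ne_zero hvne
    apply mul_ne_zero _ hvne
    rw [Finset.prod_ne_zero_iff]
    intro j _
    rw [hcv]
    positivity
  -- low-rank factorization: det HM = 0
  set Ab : Matrix (Fin (k+1)) (Fin (k+1)) ℚ :=
    Matrix.of (fun s i' => if h : (i':ℕ) < k then a ⟨i',h⟩ * xx ⟨i',h⟩ ^ (s:ℕ) else 0) with hAb
  set Bb : Matrix (Fin (k+1)) (Fin (k+1)) ℚ :=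
    Matrix.of (fun i' t => if h : (i':ℕ) < k then xx ⟨i',h⟩ ^ (t:ℕ) else 0) with hBb
  have hHAB : HM = Ab * Bb := by
    ext s t
    rw [Matrix.mul_apply, Fin.sum_univ_castSucc]
    have hlast : Ab s (Fin.last k) * Bb (Fin.last k) t = 0 := by
      have h0 : Ab s (Fin.last k) = 0 := by
        simp [hAb]
      rw [h0, zero_mul]
    rw [hlast, add_zero]
    have hc : ∀ i : Fin k, Ab s i.castSucc * Bb i.castSucc t
        = a i * xx i ^ ((s:ℕ) + (t:ℕ)) := by
      intro i
      have hv : ((i.castSucc : Fin (k+1)) : ℕ) < k := by simp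
      have hfe : (⟨((i.castSucc : Fin (k+1)) : ℕ), hv⟩ : Fin k) = i := Fin.ext (by simp)
      simp only [hAb, hBb, Matrix.of_apply]
      rw [dif_pos hv, dif_pos hv, hfe, pow_add]
      ring
    rw [Finset.sum_congr rfl (fun i _ => hc i)]
    exact (hsum ((s:ℕ)+(t:ℕ))).symm
  have hdetz : HM.det = 0 := by
    rw [hHAB, Matrix.det_mul]
    have hcol : ∀ s, Ab s (Fin.last k) = 0 := by
      intro s
      simp [hAb]
    rw [Matrix.det_eq_zero_of_column_eq_zero (Fin.last k) hcol, zero_mul]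
  exact hdetne hdetz

end final

lemma pos_part (k : ℕ) :
    ∃ (d : ℕ) (M : Matrix (Fin d) (Fin d) ℚ) (I F : Fin d → ℚ),
      Recognizes M I F (fun n => ∑ i ∈ Finset.range (k + 1), ((i : ℚ) + 1) ^ n) ∧
      ∀ n : ℕ, ambiguity M I F n ≤ k + 1 := by
  refine ⟨k+1, Matrix.diagonal (fun i : Fin (k+1) => (i:ℚ)+1),
    (fun _ => 1), (fun _ => 1), ?_, ?_⟩
  · intro n
    show (∑ i ∈ Finset.range (k + 1), ((i : ℚ) + 1) ^ n) = _
    rw [Matrix.diagonal_pow, ← Fin.sum_univ_eq_sum_range (fun i => ((i:ℚ)+1)^n) (k+1)]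
    simp [dotProduct, Matrix.mulVec_diagonal]
  · intro n
    have hconst : ∀ r : Fin (n+1) → Fin (k+1),
        AcceptingRun (Matrix.diagonal fun i : Fin (k+1) => (i:ℚ)+1)
          (fun _ => (1:ℚ)) (fun _ => (1:ℚ)) n r → ∀ i : Fin (n+1), r i = r 0 := by
      intro r hr i
      obtain ⟨-, -, hM⟩ := hr
      have hstep : ∀ m : ℕ, ∀ hm : m < n, r ⟨m+1, by omega⟩ = r ⟨m, by omega⟩ := by
        intro m hm
        have h2 : r (⟨m, hm⟩ : Fin n).castSucc = r (⟨m, hm⟩ : Fin n).succ := by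
          by_contra hne
          exact hM ⟨m, hm⟩ (Matrix.diagonal_apply_ne _ hne)
        have e1 : (⟨m, hm⟩ : Fin n).castSucc = (⟨m, by omega⟩ : Fin (n+1)) := Fin.ext (by simp)
        have e2 : (⟨m, hm⟩ : Fin n).succ = (⟨m+1, by omega⟩ : Fin (n+1)) := Fin.ext (by simp)
        rw [e1, e2] at h2
        exact h2.symm
      have hval : ∀ m, ∀ hm : m < n + 1, r ⟨m, hm⟩ = r 0 := by
        intro m
        induction m with
        | zero => intro hm; exact congrArg r (Fin.ext rfl)
        | succ m ih =>
          intro hm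
          rw [hstep m (by omega)]
          exact ih (by omega)
      have h3 := hval i i.isLt
      rwa [show (⟨(i:ℕ), i.isLt⟩ : Fin (n+1)) = i from Fin.ext rfl] at h3
    have hinj : Function.Injective
        (fun r : {r : Fin (n+1) → Fin (k+1) // AcceptingRun
            (Matrix.diagonal fun i : Fin (k+1) => (i:ℚ)+1)
            (fun _ => (1:ℚ)) (fun _ => (1:ℚ)) n r} => r.1 0) := by
      intro r1 r2 h12
      apply Subtype.ext
      funext i
      rw [hconst r1.1 r1.2 i, hconst r2.1 r2.2 i]
      exact h12
    have hle := Nat.card_le_card_of_injective _ hinj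
    rw [Nat.card_eq_fintype_card (α := Fin (k+1)), Fintype.card_fin] at hle
    exact hle

end PSAH

/-- For every `k ≥ 1`, the sequence `u n = 1^n + 2^n + … + (k+1)^n` is
recognized by a `(k+1)`-ambiguous weighted automaton but by no `k`-ambiguous one. -/
theorem power_sum_ambiguity_hierarchy (k : ℕ) (hk : 1 ≤ k) :
    (∃ (d : ℕ) (M : Matrix (Fin d) (Fin d) ℚ) (I F : Fin d → ℚ),
      Recognizes M I F (fun n => ∑ i ∈ Finset.range (k + 1), ((i : ℚ) + 1) ^ n) ∧
      ∀ n : ℕ, ambiguity M I F n ≤ k + 1) ∧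
    ¬ (∃ (d : ℕ) (M : Matrix (Fin d) (Fin d) ℚ) (I F : Fin d → ℚ),
      Recognizes M I F (fun n => ∑ i ∈ Finset.range (k + 1), ((i : ℚ) + 1) ^ n) ∧
      ∀ n : ℕ, ambiguity M I F n ≤ k) := by
  constructor
  · exact PSAH.pos_part k
  · rintro ⟨d, M, I, F, hrec, hamb⟩
    exact PSAH.no_k_ambiguous k M I F hrec hamb
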